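/- Let $w \in RH_p$ with $1 < p \le \infty$ and $v \in RH_q(w)$ with $1 < q \le \infty$. Then for every ball $B$ and every measurable $E \subset B$, $vw(E)/vw(B) \le [v]_{RH_q(w)} [w]_{RH_p}^{1/q'} (|E|/|B|)^{1/(p'q')}$. -/

import Mathlib

open MeasureTheory Metric ENNReal NNReal Set

noncomputable section

/-- `w ∈ RH_p` with constant at most `C`, for `1 < p ≤ ∞`, with respect to Lebesgue measure. -/
def rhBound (n : ℕ) (w : EuclideanSpace ℝ (Fin n) → ℝ≥0∞) (p : ℝ≥0∞) (C : ℝ≥0∞) : Prop :=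
  ∀ (c : EuclideanSpace ℝ (Fin n)) (r : ℝ), 0 < r →
    (if p = ∞ then essSup w (volume.restrict (ball c r))
      else ((∫⁻ x in ball c r, (w x) ^ p.toReal) / volume (ball c r)) ^ (1 / p.toReal))
      ≤ C * ((∫⁻ x in ball c r, w x) / volume (ball c r))

/-- `v ∈ RH_q(w)` with constant at most `C`, for `1 < q ≤ ∞`, with respect to the measure
`dw = w dx`. -/
def rhBoundW (n : ℕ) (w v : EuclideanSpace ℝ (Fin n) → ℝ≥0∞) (q : ℝ≥0∞) (C : ℝ≥0∞) : Prop :=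
  ∀ (c : EuclideanSpace ℝ (Fin n)) (r : ℝ), 0 < r →
    (if q = ∞ then essSup v ((volume.withDensity w).restrict (ball c r))
      else ((∫⁻ x in ball c r, (v x) ^ q.toReal * w x) /
              (∫⁻ x in ball c r, w x)) ^ (1 / q.toReal))
      ≤ C * ((∫⁻ x in ball c r, v x * w x) / (∫⁻ x in ball c r, w x))

private lemma rh_key {α : Type*} [MeasurableSpace α] (μ : Measure α)
    (f : α → ℝ≥0∞) (hf : Measurable f) (p C : ℝ≥0∞) (hp : 1 < p)
    (hμ0 : μ univ ≠ 0) (hμt : μ univ ≠ ∞)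
    (hbound : (if p = ∞ then essSup f μ
      else ((∫⁻ x, f x ^ p.toReal ∂μ) / μ univ) ^ (1 / p.toReal)) ≤
        C * ((∫⁻ x, f x ∂μ) / μ univ))
    (E : Set α) (hE : MeasurableSet E) :
    ∫⁻ x in E, f x ∂μ ≤ C * (∫⁻ x, f x ∂μ) * (μ E / μ univ) ^ (1 - 1/p).toReal := by
  by_cases hptop : p = ∞
  · subst hptop
    rw [if_pos rfl] at hbound
    have h1 : ((1 : ℝ≥0∞) - 1/∞).toReal = 1 := by simp
    rw [h1, ENNReal.rpow_one]
    have step : ∫⁻ x in E, f x ∂μ ≤ essSup f μ * μ E := by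
      calc ∫⁻ x in E, f x ∂μ ≤ ∫⁻ _ in E, essSup f μ ∂μ :=
            lintegral_mono_ae (ae_restrict_of_ae (ae_le_essSup f))
        _ = essSup f μ * μ E := by
            rw [setLIntegral_const]
    calc ∫⁻ x in E, f x ∂μ ≤ essSup f μ * μ E := step
      _ ≤ (C * ((∫⁻ x, f x ∂μ) / μ univ)) * μ E := mul_le_mul_left hbound _
      _ = C * (∫⁻ x, f x ∂μ) * (μ E / μ univ) := by
          rw [div_eq_mul_inv, div_eq_mul_inv]; ring
  · rw [if_neg hptop] at hbound
    set pr := p.toReal with hprdef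
    have hprR : 1 < pr := by
      rw [← ENNReal.toReal_one, hprdef]
      exact (ENNReal.toReal_lt_toReal ENNReal.one_ne_top hptop).mpr hp
    have hpq : pr.HolderConjugate (Real.conjExponent pr) :=
      Real.HolderConjugate.conjExponent hprR
    set pr' := Real.conjExponent pr with hpr'def
    have hexp : ((1 : ℝ≥0∞) - 1/p).toReal = 1/pr' := by
      have h1p : 1/p ≤ 1 := by
        rw [one_div]; exact ENNReal.inv_le_one.mpr hp.le
      rw [ENNReal.toReal_sub_of_le h1p ENNReal.one_ne_top, ENNReal.toReal_div,
        ENNReal.toReal_one]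
      have := hpq.inv_add_inv_eq_one
      rw [one_div, one_div, ← hprdef]
      linarith
    rw [hexp]
    -- Hölder
    set g : α → ℝ≥0∞ := E.indicator (fun _ => 1) with hgdef
    have hgm : Measurable g := measurable_const.indicator hE
    have hholder := ENNReal.lintegral_mul_le_Lp_mul_Lq μ hpq hf.aemeasurable hgm.aemeasurable
    have hfg : ∫⁻ a, (f * g) a ∂μ = ∫⁻ x in E, f x ∂μ := by
      have : f * g = E.indicator f := by
        funext x
        by_cases hx : x ∈ E <;> simp [hgdef, indicator, hx]
      rw [this, lintegral_indicator hE]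
    have hgq : ∫⁻ a, g a ^ pr' ∂μ = μ E := by
      have : (fun a => g a ^ pr') = E.indicator (fun _ => 1) := by
        funext x
        by_cases hx : x ∈ E <;>
          simp [hgdef, indicator, hx, ENNReal.zero_rpow_of_pos hpq.symm.pos]
      rw [this, lintegral_indicator hE]
      simp
    rw [hfg, hgq] at hholder
    set J := ∫⁻ x, f x ^ pr ∂μ with hJdef
    set I := ∫⁻ x, f x ∂μ with hIdef
    set U := μ univ with hUdef
    set u1 := U ^ (1/pr) with hu1def
    set u2 := U ^ (1/pr') with hu2def
    have hu1_0 : u1 ≠ 0 := (ENNReal.rpow_pos (pos_iff_ne_zero.mpr hμ0) hμt).ne'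
    have hu1_t : u1 ≠ ∞ := ENNReal.rpow_ne_top_of_nonneg hpq.one_div_nonneg hμt
    have hu2_0 : u2 ≠ 0 := (ENNReal.rpow_pos (pos_iff_ne_zero.mpr hμ0) hμt).ne'
    have hu2_t : u2 ≠ ∞ := ENNReal.rpow_ne_top_of_nonneg hpq.symm.one_div_nonneg hμt
    have hu : u1 * u2 = U := by
      rw [hu1def, hu2def, ← ENNReal.rpow_add _ _ hμ0 hμt]
      rw [one_div, one_div, hpq.inv_add_inv_eq_one, ENNReal.rpow_one]
    have hJle : J ^ (1/pr) ≤ C * (I / U) * u1 := by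
      have : J ^ (1/pr) = (J / U) ^ (1/pr) * u1 := by
        rw [ENNReal.div_rpow_of_nonneg _ _ hpq.one_div_nonneg, hu1def,
          ENNReal.div_mul_cancel hu1_0 hu1_t]
      rw [this]
      exact mul_le_mul_left hbound _
    have hIU : I / U * u1 = I / u2 := by
      rw [← hu, div_eq_mul_inv, ENNReal.mul_inv (Or.inl hu1_0) (Or.inr hu2_0)]
      calc I * (u1⁻¹ * u2⁻¹) * u1 = I * u2⁻¹ * (u1⁻¹ * u1) := by ring
        _ = I / u2 := by rw [ENNReal.inv_mul_cancel hu1_0 hu1_t, mul_one, div_eq_mul_inv]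
    have hJle2 : J ^ (1/pr) ≤ C * (I / u2) := by
      rw [← hIU, ← mul_assoc]; exact hJle
    calc ∫⁻ x in E, f x ∂μ ≤ J ^ (1/pr) * μ E ^ (1/pr') := hholder
      _ ≤ C * (I / u2) * μ E ^ (1/pr') := mul_le_mul_left hJle2 _
      _ = C * I * (μ E / U) ^ (1/pr') := by
          rw [ENNReal.div_rpow_of_nonneg _ _ hpq.symm.one_div_nonneg, ← hu2def]
          simp only [div_eq_mul_inv]
          ring

/-- Let `w ∈ RH_p` (constant `Cw`) with `1 < p ≤ ∞` and `v ∈ RH_q(w)`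
(constant `Cv`) with `1 < q ≤ ∞`. Then for every ball `B = B(c,r)` and measurable `E ⊆ B`,
`vw(E)/vw(B) ≤ Cv · Cw^(1/q') · (|E|/|B|)^(1/(p'q'))`, where `1/p' = 1 - 1/p` and
`1/q' = 1 - 1/q`. -/
theorem rh_rhw_measure_estimate
    (n : ℕ) (w v : EuclideanSpace ℝ (Fin n) → ℝ≥0∞) (p q : ℝ≥0∞) (hp : 1 < p) (hq : 1 < q)
    (Cw Cv : ℝ≥0∞) (hCw : Cw ≠ ∞) (hCv : Cv ≠ ∞)
    (hw : Measurable w) (hv : Measurable v)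
    (hwloc : ∀ (c : EuclideanSpace ℝ (Fin n)) (r : ℝ), 0 < r →
      0 < (∫⁻ x in ball c r, w x) ∧ (∫⁻ x in ball c r, w x) ≠ ∞)
    (hvwloc : ∀ (c : EuclideanSpace ℝ (Fin n)) (r : ℝ), 0 < r →
      0 < (∫⁻ x in ball c r, v x * w x) ∧ (∫⁻ x in ball c r, v x * w x) ≠ ∞)
    (hRHp : rhBound n w p Cw) (hRHq : rhBoundW n w v q Cv)
    (c : EuclideanSpace ℝ (Fin n)) (r : ℝ) (hr : 0 < r)
    (E : Set (EuclideanSpace ℝ (Fin n))) (hE : MeasurableSet E) (hEB : E ⊆ ball c r) :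
    (∫⁻ x in E, v x * w x) / (∫⁻ x in ball c r, v x * w x) ≤
      Cv * Cw ^ ((1 - 1/q).toReal) *
        ((volume E) / (volume (ball c r))) ^ (((1 - 1/p) * (1 - 1/q)).toReal) := by
  set B := ball c r with hBdef
  have hB : MeasurableSet B := measurableSet_ball
  have hvolB0 : volume B ≠ 0 := (measure_ball_pos _ _ hr).ne'
  have hvolBt : volume B ≠ ∞ := measure_ball_lt_top.ne
  obtain ⟨hW0, hWt⟩ := hwloc c r hr
  obtain ⟨hV0, hVt⟩ := hvwloc c r hr
  have hrestE : (volume.restrict B).restrict E = volume.restrict E := by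
    rw [Measure.restrict_restrict hE, inter_eq_left.mpr hEB]
  -- Step 1 : weight estimate
  have key1 : ∫⁻ x in E, w x ≤
      Cw * (∫⁻ x in B, w x) * (volume E / volume B) ^ ((1 - 1/p).toReal) := by
    have h := rh_key (volume.restrict B) w hw p Cw hp
      (by simpa using hvolB0) (by simpa using hvolBt) ?_ E hE
    · rw [hrestE] at h
      simpa [Measure.restrict_apply_univ, Measure.restrict_apply hE,
        inter_eq_left.mpr hEB] using h
    · simpa [Measure.restrict_apply_univ] using hRHp c r hr
  -- Step 2 : v w estimate
  set μ2 := (volume.restrict B).withDensity w with hμ2def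
  have hμ2univ : μ2 univ = ∫⁻ x in B, w x := by
    rw [hμ2def, withDensity_apply _ MeasurableSet.univ, Measure.restrict_univ]
  have hμ2E : μ2 E = ∫⁻ x in E, w x := by
    rw [hμ2def, withDensity_apply _ hE, hrestE]
  have hμ2int : ∫⁻ x, v x ∂μ2 = ∫⁻ x in B, v x * w x := by
    rw [hμ2def, lintegral_withDensity_eq_lintegral_mul _ hw hv]
    exact lintegral_congr fun x => mul_comm _ _
  have hμ2intE : ∫⁻ x in E, v x ∂μ2 = ∫⁻ x in E, v x * w x := by
    rw [hμ2def, restrict_withDensity hE, hrestE,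
      lintegral_withDensity_eq_lintegral_mul _ hw hv]
    exact lintegral_congr fun x => mul_comm _ _
  have key2 : ∫⁻ x in E, v x * w x ≤
      Cv * (∫⁻ x in B, v x * w x) *
        ((∫⁻ x in E, w x) / (∫⁻ x in B, w x)) ^ ((1 - 1/q).toReal) := by
    have h := rh_key μ2 v hv q Cv hq
      (by rw [hμ2univ]; exact hW0.ne') (by rw [hμ2univ]; exact hWt) ?_ E hE
    · rw [hμ2intE, hμ2univ, hμ2int, hμ2E] at h
      exact h
    · have hbq := hRHq c r hr
      rw [hμ2univ, hμ2int]
      by_cases hqt : q = ∞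
      · rw [if_pos hqt] at hbq ⊢
        rw [hμ2def, ← restrict_withDensity hB]
        exact hbq
      · rw [if_neg hqt] at hbq ⊢
        have : ∫⁻ x, v x ^ q.toReal ∂μ2 = ∫⁻ x in B, v x ^ q.toReal * w x := by
          rw [hμ2def, lintegral_withDensity_eq_lintegral_mul _ hw (hv.pow_const _)]
          exact lintegral_congr fun x => mul_comm _ _
        rw [this]
        exact hbq
  -- Combine
  set a := ((1 : ℝ≥0∞) - 1/p).toReal with hadef
  set b := ((1 : ℝ≥0∞) - 1/q).toReal with hbdef
  have hb0 : 0 ≤ b := ENNReal.toReal_nonneg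
  have hab : (((1 : ℝ≥0∞) - 1/p) * (1 - 1/q)).toReal = a * b := ENNReal.toReal_mul
  have hWdiv : (∫⁻ x in E, w x) / (∫⁻ x in B, w x) ≤
      Cw * (volume E / volume B) ^ a := by
    rw [ENNReal.div_le_iff hW0.ne' hWt]
    calc ∫⁻ x in E, w x ≤ Cw * (∫⁻ x in B, w x) * (volume E / volume B) ^ a := key1
      _ = Cw * (volume E / volume B) ^ a * (∫⁻ x in B, w x) := by ring
  have hpow : ((∫⁻ x in E, w x) / (∫⁻ x in B, w x)) ^ b ≤
      Cw ^ b * (volume E / volume B) ^ (a * b) := by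
    calc ((∫⁻ x in E, w x) / (∫⁻ x in B, w x)) ^ b
        ≤ (Cw * (volume E / volume B) ^ a) ^ b := ENNReal.rpow_le_rpow hWdiv hb0
      _ = Cw ^ b * (volume E / volume B) ^ (a * b) := by
          rw [ENNReal.mul_rpow_of_nonneg _ _ hb0, ← ENNReal.rpow_mul]
  rw [hab, ENNReal.div_le_iff hV0.ne' hVt]
  calc ∫⁻ x in E, v x * w x
      ≤ Cv * (∫⁻ x in B, v x * w x) *
        ((∫⁻ x in E, w x) / (∫⁻ x in B, w x)) ^ b := key2
    _ ≤ Cv * (∫⁻ x in B, v x * w x) *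
        (Cw ^ b * (volume E / volume B) ^ (a * b)) := mul_le_mul_right hpow _
    _ = Cv * Cw ^ b * (volume E / volume B) ^ (a * b) * (∫⁻ x in B, v x * w x) := by
        ring
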